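/- For positive integers n > μ ≥ l ≥ 1 and λ ≥ 1, the covering number satisfies the Schönheim recursion: C_λ(n,μ,l) ≥ ⌈(n/μ)·C_λ(n-1,μ-1,l-1)⌉, where C_λ(n,μ,0) = λ. -/

import Mathlib

lemma filter_nsmul' {α} (p : α → Prop) [DecidablePred p] (k : ℕ) (s : Multiset α) :
    Multiset.filter p (k • s) = k • Multiset.filter p s := by
  induction k with
  | zero => simp
  | succ k ih => simp [succ_nsmul, Multiset.filter_add, ih]

lemma sum_card_filter {N : ℕ} (B : Multiset (Finset (Fin N))) :
    ∑ x : Fin N, Multiset.card (B.filter fun b => x ∈ b) = (B.map Finset.card).sum := by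
  induction B using Multiset.induction with
  | empty => simp
  | cons a B ih =>
    simp only [Multiset.filter_cons, Multiset.map_cons, Multiset.sum_cons,
      Multiset.card_add, Finset.sum_add_distrib, ih]
    congr 1
    have h : ∀ x : Fin N, Multiset.card (if x ∈ a then ({a} : Multiset (Finset (Fin N))) else 0)
        = if x ∈ a then 1 else 0 := by intro x; split <;> simp
    simp [h, Finset.sum_ite, Finset.filter_mem_eq_inter]


/-- The minimum number of blocks in an `l`-(n,μ,λ) covering. -/
noncomputable def coveringNumber (lam n μ l : ℕ) : ℕ :=
  sInf {m | ∃ B : Multiset (Finset (Fin n)),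
      (∀ b ∈ B, b.card = μ) ∧
      (∀ s : Finset (Fin n), s.card = l → lam ≤ Multiset.card (B.filter fun b => s ⊆ b)) ∧
      Multiset.card B = m}

/-- The Schönheim recursion: `C_λ(n,μ,l) ≥ ⌈(n/μ)·C_λ(n-1,μ-1,l-1)⌉`. -/
theorem stmt_2 (lam n μ l : ℕ) (hlam : 1 ≤ lam) (hl : 1 ≤ l) (hlμ : l ≤ μ) (hμn : μ < n) :
    ⌈(n : ℚ) / (μ : ℚ) * (coveringNumber lam (n - 1) (μ - 1) (l - 1) : ℚ)⌉₊ ≤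
      coveringNumber lam n μ l := by
  obtain ⟨n', rfl⟩ : ∃ n', n = n' + 1 := ⟨n - 1, by omega⟩
  simp only [Nat.add_sub_cancel]
  set C' := coveringNumber lam n' (μ - 1) (l - 1) with hC'
  -- the defining set is nonempty
  have hne : {m | ∃ B : Multiset (Finset (Fin (n' + 1))),
      (∀ b ∈ B, b.card = μ) ∧
      (∀ s : Finset (Fin (n' + 1)), s.card = l → lam ≤ Multiset.card (B.filter fun b => s ⊆ b)) ∧
      Multiset.card B = m}.Nonempty := by
    refine ⟨_, lam • (Finset.powersetCard μ (Finset.univ : Finset (Fin (n' + 1)))).val,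
      ?_, ?_, rfl⟩
    · intro b hb
      rw [Multiset.mem_nsmul] at hb
      exact (Finset.mem_powersetCard.mp (Finset.mem_val.mp hb.2)).2
    · intro s hs
      obtain ⟨t, hst, -, htc⟩ := Finset.exists_subsuperset_card_eq (n := μ) (Finset.subset_univ s)
        (by omega) (by simp; omega)
      rw [filter_nsmul', Multiset.card_nsmul]
      have : t ∈ Multiset.filter (fun b => s ⊆ b)
          (Finset.powersetCard μ (Finset.univ : Finset (Fin (n' + 1)))).val := by
        rw [Multiset.mem_filter]
        exact ⟨by simp [Finset.mem_powersetCard, htc], hst⟩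
      have h1 : 1 ≤ Multiset.card (Multiset.filter (fun b => s ⊆ b)
          (Finset.powersetCard μ (Finset.univ : Finset (Fin (n' + 1)))).val) :=
        Multiset.card_pos_iff_exists_mem.mpr ⟨t, this⟩
      calc lam = lam * 1 := (mul_one lam).symm
        _ ≤ _ := Nat.mul_le_mul_left lam h1
  obtain ⟨B, hBcard, hBcov, hBm⟩ := Nat.sInf_mem hne
  set m := coveringNumber lam (n' + 1) μ l with hm
  -- for each x, the derived covering
  have key : ∀ x : Fin (n' + 1), C' ≤ Multiset.card (B.filter fun b => x ∈ b) := by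
    intro x
    have hinj : Function.Injective x.succAbove := Fin.succAbove_right_injective
    set f : Finset (Fin (n' + 1)) → Finset (Fin n') :=
      fun b => b.preimage x.succAbove hinj.injOn with hf
    refine Nat.sInf_le ⟨(B.filter fun b => x ∈ b).map f, ?_, ?_, by simp⟩
    · intro b' hb'
      rw [Multiset.mem_map] at hb'
      obtain ⟨b, hb, rfl⟩ := hb'
      rw [Multiset.mem_filter] at hb
      have himg : (f b).image x.succAbove = b.erase x := by
        ext y
        simp only [Finset.mem_image, Finset.mem_erase, hf, Finset.mem_preimage]
        constructor
        · rintro ⟨a, ha, rfl⟩; exact ⟨Fin.succAbove_ne x a, ha⟩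
        · rintro ⟨hyx, hy⟩
          obtain ⟨a, rfl⟩ := Fin.exists_succAbove_eq hyx
          exact ⟨a, hy, rfl⟩
      have := congrArg Finset.card himg
      rw [Finset.card_image_of_injective _ hinj, Finset.card_erase_of_mem hb.2,
        hBcard b hb.1] at this
      exact this
    · intro s' hs'
      set t := s'.image x.succAbove with ht
      have hxt : x ∉ t := by
        simp only [ht, Finset.mem_image]
        rintro ⟨a, _, ha⟩
        exact Fin.succAbove_ne x a ha
      have hcards : (insert x t).card = l := by
        rw [Finset.card_insert_of_notMem hxt, ht,
          Finset.card_image_of_injective _ hinj, hs']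
        omega
      have h1 := hBcov (insert x t) hcards
      rw [Multiset.filter_map, Multiset.card_map, Multiset.filter_filter]
      refine le_trans h1 (Multiset.card_le_card (Multiset.monotone_filter_right B ?_))
      intro b hb
      have hxb : x ∈ b := hb (Finset.mem_insert_self x t)
      have hsub : s' ⊆ f b := fun a ha =>
        Finset.mem_preimage.mpr (hb (Finset.mem_insert_of_mem (Finset.mem_image_of_mem _ ha)))
      exact ⟨hsub, hxb⟩
  -- double counting
  have hsum : (n' + 1) * C' ≤ m * μ := by
    have h2 : (n' + 1) * C' ≤ ∑ x : Fin (n' + 1), Multiset.card (B.filter fun b => x ∈ b) := by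
      calc (n' + 1) * C' = ∑ _x : Fin (n' + 1), C' := by
            simp [Finset.sum_const, Finset.card_univ]
        _ ≤ _ := Finset.sum_le_sum fun x _ => key x
    have h3 : (B.map Finset.card).sum = m * μ := by
      have : B.map Finset.card = Multiset.replicate m μ := by
        rw [Multiset.eq_replicate]
        constructor
        · rw [Multiset.card_map, hBm]; rfl
        · intro c hc
          rw [Multiset.mem_map] at hc
          obtain ⟨b, hb, rfl⟩ := hc
          exact hBcard b hb
      rw [this, Multiset.sum_replicate, smul_eq_mul]
    rw [sum_card_filter, h3] at h2
    exact h2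
  rw [Nat.ceil_le, div_mul_eq_mul_div, div_le_iff₀ (by exact_mod_cast (show 0 < μ by omega) : (0:ℚ) < μ)]
  exact_mod_cast hsum
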